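/- arXiv:1704.02219 — 2 statements merged into one kernel-verified Lean document; each statement's English description precedes it below -/
import Mathlib

section
/- Let γ : [−1,1] → ℂ be continuously differentiable with γ'(t) ≠ 0, let n(t) = iγ'(t)/|γ'(t)|, and let σ : [−1,1] → ℂ be continuous. Let z₀ ∈ ℂ with r := inf_{t∈[−1,1]} |γ(t) − z₀| > 0, and define a_m = −(r^m/(2π)) ∫_{−1}^{1} σ(t) n(t) (γ(t) − z₀)^{−(m+1)} |γ'(t)| dt. Then for every z ∈ ℂ with |z − z₀| < r, the complex double layer potential v(z) = (1/(2π)) ∫_{−1}^{1} n(t) σ(t) (z − γ(t))^{−1} |γ'(t)| dt equals the absolutely convergent series Σ_{m=0}^∞ a_m (z − z₀)^m / r^m. -/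
open scoped Real
open Complex MeasureTheory

/-- Local expansion of the Laplace double layer potential: for `|z - z₀| < r`,
the complex double layer potential `v(z)` equals the absolutely convergent series
`∑ a_m (z - z₀)^m / r^m`, with `a_m` the QBX coefficients. -/
theorem stmt_3 (γ γ' : ℝ → ℂ) (σ : ℝ → ℂ) (z₀ : ℂ) (r : ℝ) (a : ℕ → ℂ) (v : ℂ → ℂ)
    (hγ : ∀ t ∈ Set.Icc (-1 : ℝ) 1, HasDerivAt γ (γ' t) t)
    (hγ'c : ContinuousOn γ' (Set.Icc (-1 : ℝ) 1))
    (hγ'0 : ∀ t ∈ Set.Icc (-1 : ℝ) 1, γ' t ≠ 0)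
    (hσ : ContinuousOn σ (Set.Icc (-1 : ℝ) 1))
    (hr : r = ⨅ t : Set.Icc (-1 : ℝ) 1, ‖γ t - z₀‖)
    (hrpos : 0 < r)
    (ha : ∀ m : ℕ, a m =
      -((r : ℂ) ^ m / (2 * π)) * ∫ t in (-1 : ℝ)..1,
        σ t * (Complex.I * γ' t / ((‖γ' t‖ : ℝ) : ℂ)) *
          ((γ t - z₀) ^ (m + 1))⁻¹ * ((‖γ' t‖ : ℝ) : ℂ))
    (hv : ∀ z : ℂ, v z =
      (1 / (2 * π)) * ∫ t in (-1 : ℝ)..1,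
        (Complex.I * γ' t / ((‖γ' t‖ : ℝ) : ℂ)) * σ t *
          (z - γ t)⁻¹ * ((‖γ' t‖ : ℝ) : ℂ)) :
    ∀ z : ℂ, ‖z - z₀‖ < r →
      Summable (fun m : ℕ => ‖a m * (z - z₀) ^ m / (r : ℂ) ^ m‖) ∧
        HasSum (fun m : ℕ => a m * (z - z₀) ^ m / (r : ℂ) ^ m) (v z) := by
  have hle : (-1 : ℝ) ≤ 1 := by norm_num
  have hπ : (2 * (π : ℂ)) ≠ 0 := by
    simp [Real.pi_ne_zero, Complex.ofReal_ne_zero]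
  set g : ℝ → ℂ := fun t => σ t * (Complex.I * γ' t) with hg
  -- lower bound on |γ t - z₀|
  have hge : ∀ t ∈ Set.Icc (-1 : ℝ) 1, r ≤ ‖γ t - z₀‖ := by
    intro t ht
    rw [hr]
    exact ciInf_le ⟨0, by rintro x ⟨i, rfl⟩; positivity⟩ (⟨t, ht⟩ : Set.Icc (-1 : ℝ) 1)
  have hγz : ∀ t ∈ Set.Icc (-1 : ℝ) 1, γ t - z₀ ≠ 0 := by
    intro t ht h0
    have := hge t ht
    rw [h0] at this
    simp at this
    linarith
  -- simplified coefficient formulas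
  have hA : ∀ m : ℕ, a m =
      -((r : ℂ) ^ m / (2 * π)) * ∫ t in (-1 : ℝ)..1, g t * ((γ t - z₀) ^ (m + 1))⁻¹ := by
    intro m
    rw [ha m]
    congr 1
    apply intervalIntegral.integral_congr
    intro t ht
    rw [Set.uIcc_of_le hle] at ht
    have h0 : ((‖γ' t‖ : ℝ) : ℂ) ≠ 0 := by
      simp [Complex.ofReal_ne_zero, norm_ne_zero_iff, hγ'0 t ht]
    have : σ t * (Complex.I * γ' t / ((‖γ' t‖ : ℝ) : ℂ)) *
          ((γ t - z₀) ^ (m + 1))⁻¹ * ((‖γ' t‖ : ℝ) : ℂ) =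
        σ t * (Complex.I * γ' t) * ((γ t - z₀) ^ (m + 1))⁻¹ *
          (((‖γ' t‖ : ℝ) : ℂ) / ((‖γ' t‖ : ℝ) : ℂ)) := by
      ring
    beta_reduce
    rw [this, div_self h0, mul_one]
  have hV : ∀ z : ℂ, v z = (1 / (2 * π)) * ∫ t in (-1 : ℝ)..1, g t * (z - γ t)⁻¹ := by
    intro z
    rw [hv z]
    congr 1
    apply intervalIntegral.integral_congr
    intro t ht
    rw [Set.uIcc_of_le hle] at ht
    have h0 : ((‖γ' t‖ : ℝ) : ℂ) ≠ 0 := by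
      simp [Complex.ofReal_ne_zero, norm_ne_zero_iff, hγ'0 t ht]
    have : Complex.I * γ' t / ((‖γ' t‖ : ℝ) : ℂ) * σ t *
          (z - γ t)⁻¹ * ((‖γ' t‖ : ℝ) : ℂ) =
        σ t * (Complex.I * γ' t) * (z - γ t)⁻¹ *
          (((‖γ' t‖ : ℝ) : ℂ) / ((‖γ' t‖ : ℝ) : ℂ)) := by
      ring
    beta_reduce
    rw [this, div_self h0, mul_one]
  -- continuity facts
  have hγc : ContinuousOn γ (Set.Icc (-1 : ℝ) 1) :=
    fun t ht => (hγ t ht).continuousAt.continuousWithinAt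
  have hgc : ContinuousOn g (Set.Icc (-1 : ℝ) 1) :=
    hσ.mul (continuousOn_const.mul hγ'c)
  obtain ⟨M, hM⟩ := isCompact_Icc.exists_bound_of_continuousOn hgc
  have hM0 : 0 ≤ M := le_trans (norm_nonneg (g 0)) (hM 0 (by norm_num))
  intro z hz
  set w : ℂ := z - z₀ with hwdef
  have hw : ‖w‖ < r := hz
  -- the summands
  set F : ℕ → ℝ → ℂ := fun m t => g t * (w ^ m * ((γ t - z₀) ^ (m + 1))⁻¹) with hF
  have hFc : ∀ m, ContinuousOn (F m) (Set.Icc (-1 : ℝ) 1) := by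
    intro m
    apply hgc.mul
    apply continuousOn_const.mul
    apply ContinuousOn.inv₀ (((hγc.sub continuousOn_const).pow (m + 1)))
    intro t ht
    exact pow_ne_zero _ (hγz t ht)
  have hFint : ∀ m, IntegrableOn (F m) (Set.Ioc (-1 : ℝ) 1) := by
    intro m
    exact ((hFc m).integrableOn_compact isCompact_Icc).mono_set Set.Ioc_subset_Icc_self
  -- pointwise bound
  have hFb : ∀ m, ∀ t ∈ Set.Icc (-1 : ℝ) 1,
      ‖F m t‖ ≤ M * (‖w‖ ^ m / r ^ (m + 1)) := by
    intro m t ht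
    have h1 : r ^ (m + 1) ≤ ‖γ t - z₀‖ ^ (m + 1) :=
      pow_le_pow_left₀ hrpos.le (hge t ht) _
    have h2 : (0:ℝ) < r ^ (m + 1) := pow_pos hrpos _
    have : ‖F m t‖ = ‖g t‖ * (‖w‖ ^ m / ‖γ t - z₀‖ ^ (m + 1)) := by
      simp [hF, map_mul, map_pow, map_inv₀, div_eq_mul_inv]
    rw [this]
    apply mul_le_mul (hM t ht) _ (by positivity) hM0
    apply div_le_div_of_nonneg_left (by positivity) h2 h1
  -- summable bound
  have hBsum : Summable (fun m : ℕ => M * (‖w‖ ^ m / r ^ (m + 1)) * 2) := by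
    have heq : ∀ m : ℕ, M * (‖w‖ ^ m / r ^ (m + 1)) * 2 =
        (M / r * 2) * (‖w‖ / r) ^ m := by
      intro m
      rw [pow_succ, div_pow]
      field_simp
    have hq : ‖w‖ / r < 1 := (div_lt_one hrpos).mpr hw
    have := (summable_geometric_of_lt_one (by positivity) hq).mul_left (M / r * 2)
    exact this.congr fun m => (heq m).symm
  have hnormle : ∀ m : ℕ, (∫ t in Set.Ioc (-1:ℝ) 1, ‖F m t‖) ≤
      M * (‖w‖ ^ m / r ^ (m + 1)) * 2 := by
    intro m
    have hfin : volume (Set.Ioc (-1:ℝ) 1) < ⊤ := by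
      simp [Real.volume_Ioc]
    have := norm_setIntegral_le_of_norm_le_const (f := fun t => ‖F m t‖)
      (C := M * (‖w‖ ^ m / r ^ (m + 1))) hfin
      (fun t ht => by
        rw [Real.norm_eq_abs, _root_.abs_of_nonneg (norm_nonneg _)]
        exact hFb m t (Set.Ioc_subset_Icc_self ht))
    calc (∫ t in Set.Ioc (-1:ℝ) 1, ‖F m t‖)
        ≤ ‖∫ t in Set.Ioc (-1:ℝ) 1, ‖F m t‖‖ := le_abs_self _
      _ ≤ M * (‖w‖ ^ m / r ^ (m + 1)) * (volume (Set.Ioc (-1:ℝ) 1)).toReal := this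
      _ = M * (‖w‖ ^ m / r ^ (m + 1)) * 2 := by
          rw [Real.volume_Ioc]
          norm_num
  have hSumNorm : Summable (fun m : ℕ => ∫ t in Set.Ioc (-1:ℝ) 1, ‖F m t‖) :=
    Summable.of_nonneg_of_le (fun m => integral_nonneg fun t => norm_nonneg _) hnormle hBsum
  -- pointwise sum of the series
  have hptwise : ∀ t ∈ Set.Icc (-1 : ℝ) 1,
      HasSum (fun m : ℕ => F m t) (g t * (γ t - z)⁻¹) := by
    intro t ht
    set c : ℂ := γ t - z₀ with hc
    have hc0 : c ≠ 0 := hγz t ht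
    have habs : ‖w‖ < ‖c‖ := lt_of_lt_of_le hw (hge t ht)
    have hcpos : (0:ℝ) < ‖c‖ := by
      simpa [norm_pos_iff] using hc0
    have hq : ‖w / c‖ < 1 := by
      rw [norm_div, div_lt_one hcpos]
      exact habs
    have hgeo := (hasSum_geometric_of_norm_lt_one hq).mul_left (g t * c⁻¹)
    have hcw : c - w ≠ 0 := by
      intro h0
      have hcweq : c = w := by linear_combination h0
      rw [hcweq] at habs
      exact lt_irrefl _ habs
    have heq : ∀ m : ℕ, g t * c⁻¹ * (w / c) ^ m = F m t := by
      intro m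
      simp only [hF]
      rw [div_pow, pow_succ, mul_inv]
      ring
    have hval : g t * c⁻¹ * (1 - w / c)⁻¹ = g t * (γ t - z)⁻¹ := by
      have h1 : (1 - w / c) = (c - w) / c := by field_simp
      have h2 : c - w = γ t - z := by rw [hc, hwdef]; ring
      rw [h1, ← h2, inv_div]
      field_simp
    rw [show (fun m : ℕ => g t * c⁻¹ * (w / c) ^ m) = fun m => F m t from funext heq,
      hval] at hgeo
    exact hgeo
  have hcw' : ∀ t ∈ Set.Icc (-1 : ℝ) 1, (∑' m : ℕ, F m t) = g t * (γ t - z)⁻¹ :=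
    fun t ht => (hptwise t ht).tsum_eq
  -- swap sum and integral
  have hswap := MeasureTheory.hasSum_integral_of_summable_integral_norm
    (μ := volume.restrict (Set.Ioc (-1:ℝ) 1)) (F := F) hFint hSumNorm
  have hSval : (∫ t in Set.Ioc (-1:ℝ) 1, ∑' m : ℕ, F m t) =
      ∫ t in Set.Ioc (-1:ℝ) 1, g t * (γ t - z)⁻¹ :=
    setIntegral_congr_fun measurableSet_Ioc fun t ht => hcw' t (Set.Ioc_subset_Icc_self ht)
  rw [hSval] at hswap
  -- identify the limit with v z
  have hVz : v z = -(1 / (2 * (π:ℂ))) * ∫ t in Set.Ioc (-1:ℝ) 1, g t * (γ t - z)⁻¹ := by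
    rw [hV z, intervalIntegral.integral_of_le hle]
    have hneg : (∫ t in Set.Ioc (-1:ℝ) 1, g t * (z - γ t)⁻¹) =
        ∫ t in Set.Ioc (-1:ℝ) 1, -(g t * (γ t - z)⁻¹) := by
      apply setIntegral_congr_fun measurableSet_Ioc
      intro t ht
      beta_reduce
      have h' : z - γ t = -(γ t - z) := by ring
      rw [h', inv_neg]
      ring
    rw [hneg, integral_neg]
    ring
  -- identify the terms
  have hterm : ∀ m : ℕ, a m * w ^ m / (r:ℂ) ^ m =
      -(1 / (2 * (π:ℂ))) * ∫ t in Set.Ioc (-1:ℝ) 1, F m t := by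
    intro m
    have hr0 : (r:ℂ) ≠ 0 := by
      simp only [ne_eq, Complex.ofReal_eq_zero]
      linarith
    have hrm : ((r:ℂ)) ^ m ≠ 0 := pow_ne_zero _ hr0
    have hFrw : (∫ t in Set.Ioc (-1:ℝ) 1, F m t) =
        w ^ m * ∫ t in (-1:ℝ)..1, g t * ((γ t - z₀) ^ (m + 1))⁻¹ := by
      rw [intervalIntegral.integral_of_le hle, ← integral_const_mul]
      apply setIntegral_congr_fun measurableSet_Ioc
      intro t ht
      simp only [hF]
      ring
    rw [hA m, hFrw]
    field_simp
  -- the constant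
  have hconst : ‖-(1 / (2 * (π:ℂ)))‖ = 1 / (2 * Real.pi) := by
    have h : (-(1 / (2 * (π:ℂ)))) = ((-(1 / (2 * Real.pi)) : ℝ) : ℂ) := by push_cast; ring
    rw [h, Complex.norm_real, Real.norm_eq_abs, _root_.abs_neg, _root_.abs_of_nonneg (by positivity)]
  constructor
  · refine Summable.of_nonneg_of_le (fun m => norm_nonneg _) ?_
      (hSumNorm.mul_left (1 / (2 * Real.pi)))
    · intro m
      calc ‖a m * w ^ m / (r:ℂ) ^ m‖
          = ‖-(1 / (2 * (π:ℂ))) * ∫ t in Set.Ioc (-1:ℝ) 1, F m t‖ := by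
            rw [← hterm m]
        _ = (1 / (2 * Real.pi)) * ‖∫ t in Set.Ioc (-1:ℝ) 1, F m t‖ := by
            rw [norm_mul, hconst]
        _ ≤ (1 / (2 * Real.pi)) * ∫ t in Set.Ioc (-1:ℝ) 1, ‖F m t‖ := by
            apply mul_le_mul_of_nonneg_left _ (by positivity)
            exact norm_integral_le_integral_norm _
  · have hfinal := hswap.mul_left (-(1 / (2 * (π:ℂ))))
    rw [← hVz] at hfinal
    exact hfinal.congr_fun fun m => hterm m
end

section
/- Let ρ > 1, n ≥ 1 an integer, m ∈ ℕ, and let γ(θ) = a cos θ + i b sin θ with a = (ρ + ρ⁻¹)/2, b = (ρ − ρ⁻¹)/2 parametrize the Bernstein ellipse B_ρ. Let t₀ ∈ ℂ, let h and k be holomorphic on a neighborhood of t₀, and set f(t) = h(t)/(t − t₀)^{m+1}. Suppose |f(γ(θ))| ≤ M_ρ and |k(γ(θ))| ≤ 2πC_ρ/ρ^{2n+1} for all θ ∈ [0, 2π], and that |k^{(ℓ)}(t₀)| ≤ K and |h^{(ℓ)}(t₀)| ≤ H for all 0 ≤ ℓ ≤ m. Then |(1/(2πi)) ∫₀^{2π}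 f(γ(θ)) k(γ(θ)) γ'(θ) dθ − (1/m!) Σ_{ℓ=0}^{m} binom(m, ℓ) k^{(m−ℓ)}(t₀) h^{(ℓ)}(t₀)| ≤ 4C_ρM_ρ/ρ^{2n} + (2^m/m!) K H. -/
open scoped Real

open intervalIntegral in

lemma int_abs_sin' : ∫ θ in (0:ℝ)..(2*π), |Real.sin θ| = 4 := by
  have pi_pos := Real.pi_pos
  have h1 : ∫ θ in (0:ℝ)..π, |Real.sin θ| = 2 := by
    rw [intervalIntegral.integral_congr (g := Real.sin) (by
      intro x hx
      rw [Set.uIcc_of_le Real.pi_nonneg] at hx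
      exact abs_of_nonneg (Real.sin_nonneg_of_nonneg_of_le_pi hx.1 hx.2))]
    rw [integral_sin]; norm_num
  have h2 : ∫ θ in (π:ℝ)..(2*π), |Real.sin θ| = 2 := by
    rw [intervalIntegral.integral_congr (g := fun x => -Real.sin x) (by
      intro x hx
      rw [Set.uIcc_of_le (by linarith)] at hx
      show |Real.sin x| = -Real.sin x
      rw [abs_of_nonpos]
      have : Real.sin x = -Real.sin (x - π) := by
        rw [Real.sin_sub_pi, neg_neg]
      rw [this, neg_nonpos]
      exact Real.sin_nonneg_of_nonneg_of_le_pi (by linarith [hx.1]) (by linarith [hx.2]))]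
    rw [intervalIntegral.integral_neg, integral_sin]
    rw [Real.cos_pi, Real.cos_two_pi]; norm_num
  rw [← intervalIntegral.integral_add_adjacent_intervals (a := (0:ℝ)) (b := π) (c := 2*π)
    ((Real.continuous_sin.abs).intervalIntegrable _ _)
    ((Real.continuous_sin.abs).intervalIntegrable _ _), h1, h2]
  norm_num

lemma int_abs_cos' : ∫ θ in (0:ℝ)..(2*π), |Real.cos θ| = 4 := by
  have pi_pos := Real.pi_pos
  have hs : Real.sin (3*π/2) = -1 := by
    have e : (3*π/2 : ℝ) = π + π/2 := by ring
    rw [e, Real.sin_add, Real.sin_pi, Real.cos_pi]; simp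
  have h1 : ∫ θ in (0:ℝ)..(π/2), |Real.cos θ| = 1 := by
    rw [intervalIntegral.integral_congr (g := Real.cos) (by
      intro x hx
      rw [Set.uIcc_of_le (by linarith)] at hx
      exact abs_of_nonneg (Real.cos_nonneg_of_mem_Icc ⟨by linarith [hx.1], hx.2⟩))]
    rw [integral_cos]; simp
  have h2 : ∫ θ in (π/2:ℝ)..(3*π/2), |Real.cos θ| = 2 := by
    rw [intervalIntegral.integral_congr (g := fun x => -Real.cos x) (by
      intro x hx
      rw [Set.uIcc_of_le (by linarith)] at hx
      show |Real.cos x| = -Real.cos x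
      rw [abs_of_nonpos]
      exact Real.cos_nonpos_of_pi_div_two_le_of_le hx.1 (by linarith [hx.2]))]
    rw [intervalIntegral.integral_neg, integral_cos, hs, Real.sin_pi_div_two]; ring
  have h3 : ∫ θ in (3*π/2:ℝ)..(2*π), |Real.cos θ| = 1 := by
    rw [intervalIntegral.integral_congr (g := Real.cos) (by
      intro x hx
      rw [Set.uIcc_of_le (by linarith)] at hx
      show |Real.cos x| = Real.cos x
      have e : Real.cos x = Real.cos (x - 2*π) := (Real.cos_sub_two_pi x).symm
      rw [e]
      exact abs_of_nonneg (Real.cos_nonneg_of_mem_Icc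
        ⟨by linarith [hx.1], by linarith [hx.2]⟩))]
    rw [integral_cos, hs, Real.sin_two_pi]; ring
  rw [← intervalIntegral.integral_add_adjacent_intervals (a := (0:ℝ)) (b := 3*π/2) (c := 2*π)
    ((Real.continuous_cos.abs).intervalIntegrable _ _)
    ((Real.continuous_cos.abs).intervalIntegrable _ _),
    ← intervalIntegral.integral_add_adjacent_intervals (a := (0:ℝ)) (b := π/2) (c := 3*π/2)
    ((Real.continuous_cos.abs).intervalIntegrable _ _)
    ((Real.continuous_cos.abs).intervalIntegrable _ _), h1, h2, h3]
  norm_num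

set_option maxHeartbeats 1000000 in
/-- Bound for the Gauss–Legendre quadrature error formula: the contour integral along
the Bernstein ellipse `B_ρ` minus the residue at the pole `t₀` of order `m+1` is
bounded by `4C_ρM_ρ/ρ^{2n} + (2^m/m!) K H`. -/
theorem stmt_11 (ρ : ℝ) (hρ : 1 < ρ) (n : ℕ) (hn : 1 ≤ n) (m : ℕ)
    (γ γ' : ℝ → ℂ)
    (hγ : ∀ θ : ℝ, γ θ = (((ρ + ρ⁻¹) / 2 : ℝ) : ℂ) * Real.cos θ
        + Complex.I * (((ρ - ρ⁻¹) / 2 : ℝ) : ℂ) * Real.sin θ)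
    (hγ' : ∀ θ : ℝ, γ' θ = -(((ρ + ρ⁻¹) / 2 : ℝ) : ℂ) * Real.sin θ
        + Complex.I * (((ρ - ρ⁻¹) / 2 : ℝ) : ℂ) * Real.cos θ)
    (t₀ : ℂ) (U : Set ℂ) (hU : IsOpen U) (ht₀ : t₀ ∈ U)
    (h k : ℂ → ℂ) (hh : DifferentiableOn ℂ h U) (hk : DifferentiableOn ℂ k U)
    (f : ℂ → ℂ) (hf : ∀ t : ℂ, t ≠ t₀ → f t = h t / (t - t₀) ^ (m + 1))
    (M C K H : ℝ)
    (hfM : ∀ θ ∈ Set.Icc (0 : ℝ) (2 * π), norm (f (γ θ)) ≤ M)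
    (hkC : ∀ θ ∈ Set.Icc (0 : ℝ) (2 * π),
      norm (k (γ θ)) ≤ 2 * π * C / ρ ^ (2 * n + 1))
    (hK : ∀ ℓ : ℕ, ℓ ≤ m → norm (iteratedDeriv ℓ k t₀) ≤ K)
    (hH : ∀ ℓ : ℕ, ℓ ≤ m → norm (iteratedDeriv ℓ h t₀) ≤ H) :
    norm ((1 / (2 * π * Complex.I)) *
        (∫ θ in (0 : ℝ)..(2 * π), f (γ θ) * k (γ θ) * γ' θ)
        - (1 / (m.factorial : ℂ)) *
            ∑ ℓ ∈ Finset.range (m + 1),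
              (m.choose ℓ : ℂ) * iteratedDeriv (m - ℓ) k t₀ * iteratedDeriv ℓ h t₀)
      ≤ 4 * C * M / ρ ^ (2 * n) + (2 ^ m / (m.factorial : ℝ)) * K * H := by
  have pi_pos := Real.pi_pos
  have hρ0 : (0:ℝ) < ρ := lt_trans one_pos hρ
  set A : ℝ := (ρ + ρ⁻¹) / 2 with hA
  set B : ℝ := (ρ - ρ⁻¹) / 2 with hB
  have hinv : ρ⁻¹ < 1 := inv_lt_one_of_one_lt₀ hρ
  have hA0 : 0 ≤ A := by positivity
  have hB0 : 0 ≤ B := by rw [hB]; nlinarith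
  have hAB : A + B = ρ := by rw [hA, hB]; ring
  have h02 : (0:ℝ) ∈ Set.Icc (0:ℝ) (2*π) := ⟨le_refl _, by linarith⟩
  have hM0 : 0 ≤ M := le_trans (norm_nonneg _) (hfM 0 h02)
  have hc0 : 0 ≤ 2 * π * C / ρ ^ (2*n+1) :=
    le_trans (norm_nonneg _) (hkC 0 h02)
  have hK0 : 0 ≤ K := le_trans (norm_nonneg _) (hK 0 (Nat.zero_le m))
  have hH0 : 0 ≤ H := le_trans (norm_nonneg _) (hH 0 (Nat.zero_le m))
  -- bound on |γ'|
  have hγ'bd : ∀ θ : ℝ, ‖γ' θ‖ ≤ A * |Real.sin θ| + B * |Real.cos θ| := by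
    intro θ
    rw [hγ' θ]
    refine le_trans (norm_add_le _ _) ?_
    rw [norm_mul, norm_mul, norm_mul, norm_neg, Complex.norm_I, one_mul,
      Complex.norm_real, Complex.norm_real, Complex.norm_real, Complex.norm_real,
      Real.norm_eq_abs, Real.norm_eq_abs, Real.norm_eq_abs, Real.norm_eq_abs,
      abs_of_nonneg hA0, abs_of_nonneg hB0]
  -- bound first term
  have habs2πI : ‖(1 / (2 * ↑π * Complex.I))‖ = 1 / (2*π) := by
    rw [norm_div, norm_one, norm_mul, norm_mul, Complex.norm_I, Complex.norm_two,
      Complex.norm_real, Real.norm_eq_abs, abs_of_pos pi_pos, mul_one]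
  have hint : ‖(∫ θ in (0:ℝ)..(2*π), f (γ θ) * k (γ θ) * γ' θ)‖
      ≤ M * (2 * π * C / ρ ^ (2*n+1)) * (4 * A + 4 * B) := by
    have hintg : IntervalIntegrable
        (fun θ : ℝ => M * (2 * π * C / ρ ^ (2*n+1)) * (A * |Real.sin θ| + B * |Real.cos θ|))
        MeasureTheory.volume 0 (2*π) := by
      apply Continuous.intervalIntegrable
      continuity
    have := intervalIntegral.norm_integral_le_abs_of_norm_le (μ := MeasureTheory.volume)
      (a := (0:ℝ)) (b := 2*π)
      (f := fun θ : ℝ => f (γ θ) * k (γ θ) * γ' θ)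
      (g := fun θ : ℝ => M * (2 * π * C / ρ ^ (2*n+1)) * (A * |Real.sin θ| + B * |Real.cos θ|))
      ?_ hintg
    · refine le_trans this (le_of_eq ?_)
      rw [intervalIntegral.integral_const_mul]
      rw [intervalIntegral.integral_add
          (f := fun x : ℝ => A * |Real.sin x|) (g := fun x : ℝ => B * |Real.cos x|)
          (((continuous_const.mul (Real.continuous_sin.abs)).intervalIntegrable _ _))
          (((continuous_const.mul (Real.continuous_cos.abs)).intervalIntegrable _ _)),
        intervalIntegral.integral_const_mul, intervalIntegral.integral_const_mul,
        int_abs_sin', int_abs_cos']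
      rw [abs_of_nonneg (mul_nonneg (mul_nonneg hM0 hc0)
        (add_nonneg (mul_nonneg hA0 (by norm_num)) (mul_nonneg hB0 (by norm_num))))]
      ring
    · refine MeasureTheory.ae_restrict_of_forall_mem measurableSet_uIoc ?_
      intro θ hθ
      have hθ' : θ ∈ Set.Icc (0:ℝ) (2*π) := by
        rw [Set.uIoc_of_le (by linarith)] at hθ
        exact ⟨le_of_lt hθ.1, hθ.2⟩
      show ‖_‖ ≤ _
      rw [norm_mul, norm_mul]
      have h1 := hfM θ hθ'
      have h2 := hkC θ hθ'
      have h3 := hγ'bd θ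
      have hγ'0 : (0:ℝ) ≤ A * |Real.sin θ| + B * |Real.cos θ| := by positivity
      exact mul_le_mul (mul_le_mul h1 h2 (norm_nonneg _) hM0) h3
        (norm_nonneg _) (by positivity)
  -- bound second term
  have hsum : ‖((1 / (m.factorial : ℂ)) *
      ∑ ℓ ∈ Finset.range (m + 1),
        (m.choose ℓ : ℂ) * iteratedDeriv (m - ℓ) k t₀ * iteratedDeriv ℓ h t₀)‖
      ≤ (2 ^ m / (m.factorial : ℝ)) * K * H := by
    rw [norm_mul]
    have habs1 : ‖(1 / (m.factorial : ℂ))‖ = 1 / (m.factorial : ℝ) := by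
      rw [norm_div, norm_one, Complex.norm_natCast]
    rw [habs1]
    have hsum2 : ‖(∑ ℓ ∈ Finset.range (m + 1),
        (m.choose ℓ : ℂ) * iteratedDeriv (m - ℓ) k t₀ * iteratedDeriv ℓ h t₀)‖
        ≤ 2 ^ m * (K * H) := by
      refine le_trans (norm_sum_le _ _) ?_
      have : ∀ ℓ ∈ Finset.range (m+1),
          ‖((m.choose ℓ : ℂ) * iteratedDeriv (m - ℓ) k t₀ * iteratedDeriv ℓ h t₀)‖
          ≤ (m.choose ℓ : ℝ) * (K * H) := by
        intro ℓ hℓ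
        have hℓm : ℓ ≤ m := Nat.lt_succ_iff.mp (Finset.mem_range.mp hℓ)
        rw [norm_mul, norm_mul]
        have hc : ‖((m.choose ℓ : ℂ))‖ = (m.choose ℓ : ℝ) :=
          Complex.norm_natCast _
        rw [hc, mul_assoc]
        refine mul_le_mul_of_nonneg_left ?_ (by positivity)
        exact mul_le_mul (hK _ (Nat.sub_le m ℓ)) (hH _ hℓm) (norm_nonneg _) hK0
      refine le_trans (Finset.sum_le_sum this) ?_
      rw [← Finset.sum_mul]
      have : ∑ ℓ ∈ Finset.range (m+1), ((m.choose ℓ : ℝ)) = 2 ^ m := by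
        rw [← Nat.cast_sum]
        rw [Nat.sum_range_choose]
        push_cast; ring
      rw [this]
    calc 1 / (m.factorial : ℝ) * ‖_‖
        ≤ 1 / (m.factorial : ℝ) * (2 ^ m * (K * H)) := by
          refine mul_le_mul_of_nonneg_left hsum2 (by positivity)
      _ = (2 ^ m / (m.factorial : ℝ)) * K * H := by ring
  -- combine
  refine le_trans (norm_sub_le _ _) ?_
  refine add_le_add ?_ hsum
  rw [norm_mul, habs2πI]
  refine le_trans (mul_le_mul_of_nonneg_left hint (by positivity)) (le_of_eq ?_)
  have h4 : 4 * A + 4 * B = 4 * ρ := by rw [hA, hB]; ring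
  have hπ : π ≠ 0 := ne_of_gt pi_pos
  have hρne : ρ ≠ 0 := ne_of_gt hρ0
  have hρpow : (ρ:ℝ) ^ (2*n) ≠ 0 := pow_ne_zero _ hρne
  rw [h4, pow_succ]
  field_simp
end
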